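/- Let f be a probability density on (0,∞) with ∫_0^∞ x^{1/2} f(x) dx < ∞ and let S(x) = ∫_x^∞ f(y) dy be the associated survival function. Then ∫_0^∞ S(x)^2 dx ≤ (∫_0^∞ x^{1/2} f(x) dx)^2; in particular S ∈ L^2((0,∞)). -/

import Mathlib

open MeasureTheory Set

/-- If `f` is a probability density on `(0,∞)` with finite half-moment and
`S x = ∫_x^∞ f`, then `∫_0^∞ S(x)^2 dx ≤ (∫_0^∞ x^{1/2} f(x) dx)^2`; in particular
`S ∈ L²((0,∞))`. -/
theorem stmt_1 (f : ℝ → ℝ) (hf_meas : Measurable f)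
    (hf_nonneg : ∀ x ∈ Ioi (0:ℝ), 0 ≤ f x)
    (hf_dens : ∫ x in Ioi (0:ℝ), f x = 1)
    (hmom : IntegrableOn (fun x => Real.sqrt x * f x) (Ioi 0))
    (S : ℝ → ℝ) (hS : ∀ x, S x = ∫ y in Ioi x, f y) :
    IntegrableOn (fun x => (S x) ^ 2) (Ioi 0) ∧
      ∫ x in Ioi (0:ℝ), (S x) ^ 2 ≤ (∫ x in Ioi (0:ℝ), Real.sqrt x * f x) ^ 2 := by
  have hf_int : IntegrableOn f (Ioi 0) := by
    by_contra h
    rw [integral_undef h] at hf_dens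
    norm_num at hf_dens
  set g : ℝ → ENNReal := fun y => ENNReal.ofReal (f y) with hg_def
  have hg : Measurable g := hf_meas.ennreal_ofReal
  set K : ℝ → ℝ → ENNReal := fun x y => if x < y then g y else 0 with hK_def
  have hK : Measurable (Function.uncurry K) := by
    have h : Function.uncurry K = fun p : ℝ × ℝ => if p.1 < p.2 then g p.2 else 0 := rfl
    rw [h]
    exact Measurable.ite (measurableSet_lt measurable_fst measurable_snd) (hg.comp measurable_snd) measurable_const
  have hKx : ∀ x, Measurable (K x) := fun x =>
    hK.comp (measurable_const.prodMk measurable_id)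
  have hKy : ∀ y, Measurable (fun x => K x y) := fun y =>
    hK.comp (measurable_id.prodMk measurable_const)
  set T : ℝ → ENNReal := fun x => ∫⁻ y, K x y with hT_def
  have hT : Measurable T := hK.lintegral_prod_right'
  have hTx : ∀ x, T x = ∫⁻ y in Ioi x, g y := by
    intro x
    show (∫⁻ y, K x y) = ∫⁻ y in Ioi x, g y
    have h : ∀ y, K x y = (Ioi x).indicator g y := by
      intro y; simp [hK_def, Set.indicator_apply, mem_Ioi]
    simp_rw [h]
    exact lintegral_indicator measurableSet_Ioi _
  have hS_eq : ∀ x ∈ Ioi (0:ℝ), ENNReal.ofReal (S x) = T x := by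
    intro x hx
    rw [hS x, hTx x, ofReal_integral_eq_lintegral_ofReal]
    · exact hf_int.mono_set (Ioi_subset_Ioi (le_of_lt hx))
    · filter_upwards [ae_restrict_mem measurableSet_Ioi] with y hy
      exact hf_nonneg y (mem_Ioi.2 (hx.trans hy))
  have hS_nonneg : ∀ x ∈ Ioi (0:ℝ), 0 ≤ S x := by
    intro x hx
    rw [hS x]
    exact setIntegral_nonneg measurableSet_Ioi fun y hy => hf_nonneg y (mem_Ioi.2 (hx.trans hy))
  set M := ∫ x in Ioi (0:ℝ), Real.sqrt x * f x with hM_def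
  have hM_nonneg : 0 ≤ M :=
    setIntegral_nonneg measurableSet_Ioi fun x hx =>
      mul_nonneg (Real.sqrt_nonneg x) (hf_nonneg x hx)
  set ψ : ℝ → ENNReal := fun y => ENNReal.ofReal (Real.sqrt y) * g y with hψ_def
  have hψ : Measurable ψ := (measurable_id.sqrt.ennreal_ofReal).mul hg
  set L : ENNReal := ∫⁻ y, ψ y with hL_def
  have hψ0 : ∀ y ∉ Ioi (0:ℝ), ψ y = 0 := by
    intro y hy
    have : Real.sqrt y = 0 := Real.sqrt_eq_zero'.mpr (not_lt.mp (by simpa using hy))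
    simp [hψ_def, this]
  have hL : L = ENNReal.ofReal M := by
    have h1 : L = ∫⁻ y in Ioi (0:ℝ), ψ y := by
      rw [hL_def, ← lintegral_indicator measurableSet_Ioi]
      congr 1; ext y
      by_cases hy : y ∈ Ioi (0:ℝ)
      · simp [Set.indicator_apply, hy]
      · simp [Set.indicator_apply, hy, hψ0 y hy]
    have h2 : ∀ y, ψ y = ENNReal.ofReal (Real.sqrt y * f y) := by
      intro y
      rw [hψ_def, ENNReal.ofReal_mul (Real.sqrt_nonneg y)]
    rw [h1]
    simp_rw [h2]
    rw [← ofReal_integral_eq_lintegral_ofReal hmom]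
    filter_upwards [ae_restrict_mem measurableSet_Ioi] with y hy
    exact mul_nonneg (Real.sqrt_nonneg y) (hf_nonneg y hy)
  -- the key bound
  have hmin : ∀ y z : ℝ, min y z ≤ Real.sqrt y * Real.sqrt z := by
    intro y z
    rcases le_total (min y z) 0 with h | h
    · exact h.trans (mul_nonneg (Real.sqrt_nonneg y) (Real.sqrt_nonneg z))
    · calc min y z = Real.sqrt (min y z) * Real.sqrt (min y z) := (Real.mul_self_sqrt h).symm
        _ ≤ Real.sqrt y * Real.sqrt z :=
          mul_le_mul (Real.sqrt_le_sqrt (min_le_left _ _))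
            (Real.sqrt_le_sqrt (min_le_right _ _)) (Real.sqrt_nonneg _) (Real.sqrt_nonneg _)
  have inner : ∀ y z : ℝ, (∫⁻ x in Ioi (0:ℝ), K x y * K x z)
      = g y * g z * ENNReal.ofReal (min y z) := by
    intro y z
    have h : ∀ x, K x y * K x z = (Iio (min y z)).indicator (fun _ => g y * g z) x := by
      intro x
      simp only [hK_def, Set.indicator_apply, mem_Iio, lt_min_iff]
      by_cases h1 : x < y <;> by_cases h2 : x < z <;> simp [h1, h2]
    simp_rw [h]
    rw [lintegral_indicator measurableSet_Iio, Measure.restrict_restrict measurableSet_Iio,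
      setLIntegral_const, inter_comm, Ioi_inter_Iio, Real.volume_Ioo, sub_zero]
  have key : (∫⁻ x in Ioi (0:ℝ), T x ^ 2) ≤ ENNReal.ofReal M ^ 2 := by
    have step1 : ∀ x, T x ^ 2 = ∫⁻ y, ∫⁻ z, K x y * K x z := by
      intro x
      rw [sq]
      calc T x * T x = ∫⁻ y, K x y * T x := (lintegral_mul_const _ (hKx x)).symm
        _ = ∫⁻ y, ∫⁻ z, K x y * K x z := by
            congr 1; ext y
            exact (lintegral_const_mul (K x y) (hKx x)).symm
    have swap1 : (∫⁻ x in Ioi (0:ℝ), ∫⁻ y, ∫⁻ z, K x y * K x z)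
        = ∫⁻ y, ∫⁻ x in Ioi (0:ℝ), ∫⁻ z, K x y * K x z := by
      apply lintegral_lintegral_swap
      apply Measurable.aemeasurable
      have : (Function.uncurry fun x y => ∫⁻ z, K x y * K x z)
          = fun p : ℝ × ℝ => ∫⁻ z, K p.1 p.2 * K p.1 z := rfl
      rw [this]
      exact Measurable.lintegral_prod_right'
        (f := fun q : (ℝ × ℝ) × ℝ => K q.1.1 q.1.2 * K q.1.1 q.2) <| (hK.comp ((measurable_fst.comp measurable_fst).prodMk
        (measurable_snd.comp measurable_fst))).mul
        (hK.comp ((measurable_fst.comp measurable_fst).prodMk measurable_snd))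
    have swap2 : ∀ y, (∫⁻ x in Ioi (0:ℝ), ∫⁻ z, K x y * K x z)
        = ∫⁻ z, ∫⁻ x in Ioi (0:ℝ), K x y * K x z := by
      intro y
      apply lintegral_lintegral_swap
      exact (((hKy y).comp measurable_fst).mul hK).aemeasurable
    calc (∫⁻ x in Ioi (0:ℝ), T x ^ 2)
        = ∫⁻ x in Ioi (0:ℝ), ∫⁻ y, ∫⁻ z, K x y * K x z := by simp_rw [step1]
      _ = ∫⁻ y, ∫⁻ z, ∫⁻ x in Ioi (0:ℝ), K x y * K x z := by
          rw [swap1]; congr 1; ext y; exact swap2 y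
      _ = ∫⁻ y, ∫⁻ z, g y * g z * ENNReal.ofReal (min y z) := by
          congr 1; ext y; congr 1; ext z; exact inner y z
      _ ≤ ∫⁻ y, ∫⁻ z, ψ y * ψ z := by
          apply lintegral_mono; intro y
          apply lintegral_mono; intro z
          calc g y * g z * ENNReal.ofReal (min y z)
              ≤ g y * g z * (ENNReal.ofReal (Real.sqrt y) * ENNReal.ofReal (Real.sqrt z)) := by
                apply mul_le_mul_right
                rw [← ENNReal.ofReal_mul (Real.sqrt_nonneg y)]
                exact ENNReal.ofReal_le_ofReal (hmin y z)
            _ = ψ y * ψ z := by rw [hψ_def]; ring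
      _ = L * L := by
          have h1 : ∀ y, (∫⁻ z, ψ y * ψ z) = ψ y * L := fun y => lintegral_const_mul (ψ y) hψ
          simp_rw [h1]
          exact lintegral_mul_const L hψ
      _ = ENNReal.ofReal M ^ 2 := by rw [hL, sq]
  -- transfer to the real statement
  have hI_eq : (∫⁻ x in Ioi (0:ℝ), ENNReal.ofReal ((S x) ^ 2))
      = ∫⁻ x in Ioi (0:ℝ), T x ^ 2 := by
    apply setLIntegral_congr_fun measurableSet_Ioi
    intro x hx
    dsimp only
    rw [ENNReal.ofReal_pow (hS_nonneg x hx), hS_eq x hx]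
  have hIle : (∫⁻ x in Ioi (0:ℝ), ENNReal.ofReal ((S x) ^ 2)) ≤ ENNReal.ofReal M ^ 2 :=
    hI_eq ▸ key
  have hSmeas : AEStronglyMeasurable (fun x => (S x) ^ 2) (volume.restrict (Ioi 0)) := by
    have h : (fun x => ((T x).toReal) ^ 2) =ᵐ[volume.restrict (Ioi (0:ℝ))]
        (fun x => (S x) ^ 2) := by
      filter_upwards [ae_restrict_mem measurableSet_Ioi] with x hx
      rw [← hS_eq x hx, ENNReal.toReal_ofReal (hS_nonneg x hx)]
    exact ((hT.ennreal_toReal.pow_const 2).aestronglyMeasurable).congr h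
  have htop : ENNReal.ofReal M ^ 2 < ⊤ := by
    exact ENNReal.pow_lt_top ENNReal.ofReal_lt_top
  have hint : IntegrableOn (fun x => (S x) ^ 2) (Ioi 0) := by
    refine ⟨hSmeas, ?_⟩
    rw [hasFiniteIntegral_iff_norm]
    have h : ∀ x, ENNReal.ofReal ‖(S x) ^ 2‖ = ENNReal.ofReal ((S x) ^ 2) := by
      intro x; rw [Real.norm_of_nonneg (sq_nonneg _)]
    simp_rw [h]
    exact lt_of_le_of_lt hIle htop
  refine ⟨hint, ?_⟩
  have h1 : ∫ x in Ioi (0:ℝ), (S x) ^ 2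
      = (∫⁻ x in Ioi (0:ℝ), ENNReal.ofReal ((S x) ^ 2)).toReal := by
    rw [integral_eq_lintegral_of_nonneg_ae (ae_of_all _ fun x => sq_nonneg (S x)) hSmeas]
  rw [h1]
  have h2 := ENNReal.toReal_mono htop.ne hIle
  rwa [ENNReal.toReal_pow, ENNReal.toReal_ofReal hM_nonneg] at h2
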